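/- Consider the region swap game with n = 5, k = 7, move vectors r1 = (1,1,0,1,1), r2 = (1,1,0,0,0), r3 = (1,0,1,1,0), r4 = (1,1,1,0,1), r5 = (0,0,1,1,0), r6 = (0,1,0,0,1), r7 = (0,0,1,1,1) in (ZMod 2)^5, and winning set W equal to the set of connected vectors of the twist-knot checkerboard multigraph. Then for every initial state V0 ∈ W, Player C moving first has a winning strategy. -/

import Mathlib

/-- Winning positions for Player C in the region swap game with move vectors
`r : Fin k → Fin n → ZMod 2` and winning set `W`.  The first argument is the number of
turns remaining, `used` is the set of indices already selected, the next argument is the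
current state, and the `Bool` records whether it is Player C's turn to move
(`true` = C to move).  On each turn the player to move selects an unused index `i`
together with a value `ε : ZMod 2`, changing the state by `ε • r i`.  When no turns
remain, Player C has won exactly if the final state lies in `W`. -/
def CWins {k n : ℕ} (r : Fin k → Fin n → ZMod 2) (W : Set (Fin n → ZMod 2)) :
    ℕ → Finset (Fin k) → (Fin n → ZMod 2) → Bool → Prop
  | 0, _, v, _ => v ∈ W
  | m + 1, used, v, true => ∃ i : Fin k, i ∉ used ∧ ∃ ε : ZMod 2,
      CWins r W m (insert i used) (v + ε • r i) false
  | m + 1, used, v, false => ∀ i : Fin k, i ∉ used → ∀ ε : ZMod 2,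
      CWins r W m (insert i used) (v + ε • r i) true

/-- The endpoints of the five edges of the twist-knot checkerboard multigraph on the
vertex set `Fin 4`: `e1 = {1,2}`, `e2 = {1,3}`, `e3 = {2,4}`, `e4 = {2,4}`, `e5 = {3,4}`
(vertices renamed `0,1,2,3`). -/
def twistEnds : Fin 5 → Fin 4 × Fin 4 := ![(0, 1), (0, 2), (1, 3), (1, 3), (2, 3)]

/-- The simple graph on `Fin 4` whose edges are the pairs `twistEnds i` for the
indices `i` with `v i = 1`. -/
def twistGraph (v : Fin 5 → ZMod 2) : SimpleGraph (Fin 4) :=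
  SimpleGraph.fromRel fun x y => ∃ i : Fin 5, v i = 1 ∧ twistEnds i = (x, y)

/-- The set of connected vectors of the twist-knot checkerboard multigraph: the edges
`e_i` with `v i = 1` form a spanning tree, i.e. exactly three coordinates of `v` equal
`1`, not both `v 3 = 1` and `v 4 = 1` (the parallel edges, here indices `2` and `3`),
and the corresponding edges connect all four vertices. -/
def twistW : Set (Fin 5 → ZMod 2) :=
  {v | (Finset.univ.filter fun i => v i = 1).card = 3 ∧ ¬(v 2 = 1 ∧ v 3 = 1) ∧
    (twistGraph v).Connected}

/-- The seven move vectors of the twist-knot game board. -/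
def twistMoves : Fin 7 → Fin 5 → ZMod 2 :=
  ![![1, 1, 0, 1, 1], ![1, 1, 0, 0, 0], ![1, 0, 1, 1, 0], ![1, 1, 1, 0, 1],
    ![0, 0, 1, 1, 0], ![0, 1, 0, 0, 1], ![0, 0, 1, 1, 1]]

/-! ### Auxiliary decidability instances -/

instance twistGraph.adjDec (v : Fin 5 → ZMod 2) : DecidableRel (twistGraph v).Adj :=
  fun x y => decidable_of_iff _
    ((SimpleGraph.fromRel_adj _ x y).symm : _ ↔ (twistGraph v).Adj x y)

instance twistGraph.connDec (v : Fin 5 → ZMod 2) : Decidable (twistGraph v).Connected :=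
  decidable_of_iff _ (SimpleGraph.connected_iff_exists_forall_reachable _).symm

instance twistW.dec : DecidablePred (· ∈ twistW) := fun v =>
  inferInstanceAs (Decidable ((Finset.univ.filter fun i => v i = 1).card = 3 ∧
    ¬(v 2 = 1 ∧ v 3 = 1) ∧ (twistGraph v).Connected))

/-! ### An explicit description of `twistW` -/

def twistList : List (Fin 5 → ZMod 2) :=
  [![1,1,1,0,0], ![1,1,0,1,0], ![1,1,0,0,1], ![1,0,1,0,1], ![1,0,0,1,1],
   ![0,1,1,0,1], ![0,1,0,1,1]]

def twistW' : Set (Fin 5 → ZMod 2) := {v | v ∈ twistList}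

instance twistW'.dec : DecidablePred (· ∈ twistW') := fun v =>
  inferInstanceAs (Decidable (v ∈ twistList))

set_option maxRecDepth 10000 in
theorem twistW_eq : twistW = twistW' :=
  Set.ext (by decide : ∀ v : Fin 5 → ZMod 2, v ∈ twistW ↔ v ∈ twistW')

/-! ### A fast `Bool`-valued evaluator on `Nat`-encoded states -/

/-- Encode a state vector as a 5-bit natural number. -/
def encV (V : Fin 5 → ZMod 2) : ℕ :=
  (V 0).val + 2 * (V 1).val + 4 * (V 2).val + 8 * (V 3).val + 16 * (V 4).val

/-- The move vectors, encoded. -/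
def mvN : Fin 7 → ℕ := ![27, 3, 13, 23, 12, 18, 28]

/-- The winning set, encoded. -/
def wlN : List ℕ := [7, 11, 19, 21, 25, 22, 26]

/-- All ways to pick one element of a list, together with the remaining elements. -/
def pickOne {α : Type} : List α → List (α × List α)
  | [] => []
  | a :: l => (a, l) :: (pickOne l).map (fun p => (p.1, a :: p.2))

/-- The fast evaluator. -/
def gameN : ℕ → List (Fin 7) → ℕ → Bool → Bool
  | 0, _, v, _ => wlN.contains v
  | m+1, l, v, true => (pickOne l).any fun p =>
      gameN m p.2 v false || gameN m p.2 (v ^^^ mvN p.1) false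
  | m+1, l, v, false => (pickOne l).all fun p =>
      gameN m p.2 v true && gameN m p.2 (v ^^^ mvN p.1) true

theorem enc_leaf : ∀ V : Fin 5 → ZMod 2, wlN.contains (encV V) = true ↔ V ∈ twistW' := by
  decide

theorem enc_add : ∀ (V : Fin 5 → ZMod 2) (i : Fin 7),
    encV (V + twistMoves i) = encV V ^^^ mvN i := by decide

theorem pickOne_perm {α : Type} :
    ∀ {l : List α} {p : α × List α}, p ∈ pickOne l → (p.1 :: p.2).Perm l := by
  intro l
  induction l with
  | nil => intro p hp; simp [pickOne] at hp
  | cons a l ih =>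
      intro p hp
      simp only [pickOne, List.mem_cons, List.mem_map] at hp
      rcases hp with rfl | ⟨q, hq, rfl⟩
      · rfl
      · exact (List.Perm.swap a q.1 q.2).trans ((ih hq).cons a)

theorem pickOne_mem_of_mem {α : Type} :
    ∀ {l : List α} {a : α}, a ∈ l → ∃ r, (a, r) ∈ pickOne l := by
  intro l
  induction l with
  | nil => intro a ha; simp at ha
  | cons b l ih =>
      intro a ha
      rcases List.mem_cons.mp ha with rfl | ha
      · exact ⟨l, by simp [pickOne]⟩
      · obtain ⟨r, hr⟩ := ih ha
        refine ⟨b :: r, ?_⟩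
        simp only [pickOne, List.mem_cons, List.mem_map]
        exact Or.inr ⟨(a, r), hr, rfl⟩

/-- Bridge the fast evaluator to `CWins`. -/
theorem bridge : ∀ (m : ℕ) (l : List (Fin 7)) (used : Finset (Fin 7))
    (V : Fin 5 → ZMod 2) (b : Bool), l.Nodup → (∀ i, i ∈ l ↔ i ∉ used) →
    gameN m l (encV V) b = true → CWins twistMoves twistW' m used V b := by
  intro m
  induction m with
  | zero =>
      intro l used V b _ _ h
      exact (enc_leaf V).mp h
  | succ m ih =>
      intro l used V b hnd hmem h
      cases b with
      | true =>
          simp only [gameN, List.any_eq_true] at h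
          obtain ⟨p, hp, hor⟩ := h
          have hperm := pickOne_perm hp
          have hnd' : (p.1 :: p.2).Nodup := hperm.nodup_iff.mpr hnd
          have hp1l : p.1 ∈ l := hperm.mem_iff.mp List.mem_cons_self
          have hmem' : ∀ j, j ∈ p.2 ↔ j ∉ insert p.1 used := by
            intro j
            constructor
            · intro hj
              have hjl : j ∈ l := hperm.mem_iff.mp (List.mem_cons_of_mem _ hj)
              have hjne : j ≠ p.1 := fun e => (List.nodup_cons.mp hnd').1 (e ▸ hj)
              simp [Finset.mem_insert, hjne, (hmem j).mp hjl]
            · intro hj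
              simp only [Finset.mem_insert, not_or] at hj
              have hjl : j ∈ l := (hmem j).mpr hj.2
              rcases List.mem_cons.mp (hperm.mem_iff.mpr hjl) with e | hjp
              · exact absurd e hj.1
              · exact hjp
          refine ⟨p.1, (hmem p.1).mp hp1l, ?_⟩
          rcases Bool.or_eq_true _ _ |>.mp hor with h1 | h1
          · refine ⟨0, ?_⟩
            have := ih p.2 (insert p.1 used) V false (List.nodup_cons.mp hnd').2 hmem' h1
            simpa [zero_smul] using this
          · refine ⟨1, ?_⟩
            have h1' : gameN m p.2 (encV (V + twistMoves p.1)) false = true := by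
              rw [enc_add]; exact h1
            have := ih p.2 (insert p.1 used) (V + twistMoves p.1) false
              (List.nodup_cons.mp hnd').2 hmem' h1'
            simpa [one_smul] using this
      | false =>
          simp only [gameN, List.all_eq_true] at h
          intro i hi ε
          have hil : i ∈ l := (hmem i).mpr hi
          obtain ⟨r, hr⟩ := pickOne_mem_of_mem hil
          have hperm := pickOne_perm hr
          have hnd' : (i :: r).Nodup := hperm.nodup_iff.mpr hnd
          have hmem' : ∀ j, j ∈ r ↔ j ∉ insert i used := by
            intro j
            constructor
            · intro hj
              have hjl : j ∈ l := hperm.mem_iff.mp (List.mem_cons_of_mem _ hj)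
              have hjne : j ≠ i := fun e => (List.nodup_cons.mp hnd').1 (e ▸ hj)
              simp [Finset.mem_insert, hjne, (hmem j).mp hjl]
            · intro hj
              simp only [Finset.mem_insert, not_or] at hj
              have hjl : j ∈ l := (hmem j).mpr hj.2
              rcases List.mem_cons.mp (hperm.mem_iff.mpr hjl) with e | hjp
              · exact absurd e hj.1
              · exact hjp
          have hb := h (i, r) hr
          rcases Bool.and_eq_true _ _ |>.mp hb with ⟨h1, h2⟩
          fin_cases ε
          · have := ih r (insert i used) V true (List.nodup_cons.mp hnd').2 hmem' h1
            show CWins twistMoves twistW' m (insert i used) (V + (0 : ZMod 2) • twistMoves i) true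
            simpa [zero_smul] using this
          · have h2' : gameN m r (encV (V + twistMoves i)) true = true := by
              rw [enc_add]; exact h2
            have := ih r (insert i used) (V + twistMoves i) true
              (List.nodup_cons.mp hnd').2 hmem' h2'
            show CWins twistMoves twistW' m (insert i used) (V + (1 : ZMod 2) • twistMoves i) true
            simpa [one_smul] using this

set_option maxRecDepth 100000 in
set_option maxHeartbeats 12000000 in
theorem gameN_all : ∀ V0 : Fin 5 → ZMod 2, V0 ∈ twistList →
    gameN 7 [0, 1, 2, 3, 4, 5, 6] (encV V0) true = true := by decide

theorem stmt_0 : ∀ V0 ∈ twistW, CWins twistMoves twistW 7 ∅ V0 true := by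
  rw [twistW_eq]
  intro V0 hV0
  exact bridge 7 [0, 1, 2, 3, 4, 5, 6] ∅ V0 true (by decide) (by decide)
    (gameN_all V0 hV0)
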